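/- Let z¹, z² ∈ H²(0,L) (complex-valued), λ ∈ ℂ, and q ∈ C⁰([0,L]) satisfy: z² + g = -conj(λ) z¹, (z¹)'' = -conj(λ) z², g'' = q z², z¹(0) = z²(0) = g(0) = g'(L) = 0, (z¹)'(L) - α z²(L) = 0, and additionally (z¹)'(L) = 0. Then z¹ = z² = 0. (Fattorini–Hautus-type unique continuation for the adjoint eigenvalue problem.) -/

import Mathlib

open Set Real

/-- Fattorini–Hautus-type unique continuation for the adjoint eigenvalue problem:
if `z² + g = -conj(λ) z¹`, `(z¹)'' = -conj(λ) z²`, `g'' = q z²`, with the boundary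
conditions `z¹(0) = z²(0) = g(0) = g'(L) = 0`, `(z¹)'(L) - α z²(L) = 0`, and in addition
`(z¹)'(L) = 0`, then `z¹ = z² = 0`. -/
theorem stmt_7 (L α : ℝ) (hL : 0 < L) (hα : 0 < α)
    (q : ℝ → ℝ) (hq : ContinuousOn q (Set.Icc 0 L)) (lam : ℂ)
    (z1 z2 g dz1 dg : ℝ → ℂ)
    (hrel : ∀ x ∈ Set.Icc (0:ℝ) L, z2 x + g x = -(starRingEnd ℂ lam) * z1 x)
    (hz1 : ∀ x ∈ Set.Icc (0:ℝ) L, HasDerivAt z1 (dz1 x) x ∧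
      HasDerivAt dz1 (-(starRingEnd ℂ lam) * z2 x) x)
    (hg : ∀ x ∈ Set.Icc (0:ℝ) L, HasDerivAt g (dg x) x ∧
      HasDerivAt dg ((q x : ℂ) * z2 x) x)
    (hz10 : z1 0 = 0) (hz20 : z2 0 = 0) (hg0 : g 0 = 0) (hdgL : dg L = 0)
    (hBC : dz1 L - (α:ℂ) * z2 L = 0) (hdz1L : dz1 L = 0) :
    ∀ x ∈ Set.Icc (0:ℝ) L, z1 x = 0 ∧ z2 x = 0 := by
  have hLmem : L ∈ Set.Icc (0:ℝ) L := ⟨hL.le, le_refl L⟩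
  set lc := starRingEnd ℂ lam with hlc
  -- z2 L = 0
  have hz2L : z2 L = 0 := by
    have hα' : (α:ℂ) ≠ 0 := by exact_mod_cast hα.ne'
    have : (α:ℂ) * z2 L = 0 := by linear_combination hdz1L - hBC
    exact (mul_eq_zero.1 this).resolve_left hα'
  -- Z agrees with z2 on Icc
  set Z : ℝ → ℂ := fun t => -lc * z1 t - g t with hZ
  set dz2 : ℝ → ℂ := fun t => -lc * dz1 t - dg t with hdz2
  have hZeq : ∀ x ∈ Set.Icc (0:ℝ) L, z2 x = Z x := by
    intro x hx
    have := hrel x hx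
    simp only [hZ]
    linear_combination this
  have hZd : ∀ x ∈ Set.Icc (0:ℝ) L, HasDerivAt Z (dz2 x) x := fun x hx =>
    (((hz1 x hx).1.const_mul (-lc))).sub (hg x hx).1
  have hdz2d : ∀ x ∈ Set.Icc (0:ℝ) L, HasDerivAt dz2 ((lc ^ 2 - (q x : ℂ)) * Z x) x := by
    intro x hx
    have h := (((hz1 x hx).2.const_mul (-lc))).sub (hg x hx).2
    refine h.congr_deriv ?_
    rw [← hZeq x hx]; ring
  -- bound on the coefficient
  obtain ⟨C, hC⟩ : ∃ C, ∀ t ∈ Set.Icc (0:ℝ) L, ‖lc ^ 2 - (q t : ℂ)‖ ≤ C := by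
    have hcont : ContinuousOn (fun t => ‖lc ^ 2 - (q t : ℂ)‖) (Set.Icc 0 L) :=
      (continuousOn_const.sub (Complex.continuous_ofReal.comp_continuousOn hq)).norm
    have hcont' : ContinuousOn (fun t => lc ^ 2 - (q t : ℂ)) (Set.Icc 0 L) :=
      continuousOn_const.sub (Complex.continuous_ofReal.comp_continuousOn hq)
    exact isCompact_Icc.exists_bound_of_continuousOn hcont'
  set K : ℝ := max 1 C with hK
  -- the reversed vector
  set W : ℝ → ℂ × ℂ := fun x => (Z (L - x), -dz2 (L - x)) with hW
  set W' : ℝ → ℂ × ℂ := fun x => (-dz2 (L - x), (lc ^ 2 - (q (L - x) : ℂ)) * Z (L - x)) with hW'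
  have hmem : ∀ x ∈ Set.Icc (0:ℝ) L, L - x ∈ Set.Icc (0:ℝ) L := by
    intro x hx; constructor <;> [linarith [hx.2]; linarith [hx.1]]
  have hWd : ∀ x ∈ Set.Icc (0:ℝ) L, HasDerivAt W (W' x) x := by
    intro x hx
    have hin : HasDerivAt (fun x : ℝ => L - x) (-1 : ℝ) x := (hasDerivAt_id x).const_sub L
    have h1 : HasDerivAt (Z ∘ fun y : ℝ => L - y) ((-1 : ℝ) • dz2 (L - x)) x :=
      HasDerivAt.scomp_of_eq x (hZd (L - x) (hmem x hx)) hin rfl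
    have h2 : HasDerivAt (dz2 ∘ fun y : ℝ => L - y)
        ((-1 : ℝ) • ((lc ^ 2 - (q (L - x) : ℂ)) * Z (L - x))) x :=
      HasDerivAt.scomp_of_eq x (hdz2d (L - x) (hmem x hx)) hin rfl
    have h12 := h1.prodMk h2.neg
    have : W' x = ((-1 : ℝ) • dz2 (L - x),
        -((-1 : ℝ) • ((lc ^ 2 - (q (L - x) : ℂ)) * Z (L - x)))) := by
      simp [hW', neg_smul, one_smul]
    rw [this]
    exact h12
  have hWcont : ContinuousOn W (Set.Icc 0 L) := fun x hx =>
    (hWd x hx).continuousAt.continuousWithinAt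
  have hW0 : W 0 = 0 := by
    have h1 : Z L = 0 := by rw [← hZeq L hLmem, hz2L]
    have h2 : dz2 L = 0 := by simp [hdz2, hdz1L, hdgL]
    simp [hW, h1, h2]
  have hbound : ∀ x ∈ Set.Ico (0:ℝ) L, ‖W' x‖ ≤ K * ‖W x‖ + 0 := by
    intro x hx
    have hx' := Set.mem_Icc_of_Ico hx
    have hWnn : (0:ℝ) ≤ ‖W x‖ := norm_nonneg _
    have hZle : ‖Z (L - x)‖ ≤ ‖W x‖ := norm_fst_le (W x)
    have hdle : ‖dz2 (L - x)‖ ≤ ‖W x‖ := by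
      have := norm_snd_le (W x); simpa [hW] using this
    rw [add_zero, Prod.norm_def]
    have hC' := hC (L - x) (hmem x hx')
    apply max_le
    · calc ‖(W' x).1‖ = ‖dz2 (L - x)‖ := by simp [hW']
        _ ≤ 1 * ‖W x‖ := by linarith
        _ ≤ K * ‖W x‖ := by
            apply mul_le_mul_of_nonneg_right (le_max_left 1 C) hWnn
    · calc ‖(W' x).2‖ ≤ ‖lc ^ 2 - (q (L - x) : ℂ)‖ * ‖Z (L - x)‖ := by
            simp only [hW']; exact (norm_mul_le _ _)
        _ ≤ C * ‖W x‖ := by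
            apply mul_le_mul hC' hZle (norm_nonneg _) (le_trans (norm_nonneg _) hC')
        _ ≤ K * ‖W x‖ := mul_le_mul_of_nonneg_right (le_max_right 1 C) hWnn
  have hWzero : ∀ x ∈ Set.Icc (0:ℝ) L, W x = 0 := by
    intro x hx
    have := norm_le_gronwallBound_of_norm_deriv_right_le (δ := 0) (ε := 0) hWcont
      (fun y hy => (hWd y (Set.mem_Icc_of_Ico hy)).hasDerivWithinAt)
      (le_of_eq (by rw [hW0, norm_zero])) hbound x hx
    rw [gronwallBound_ε0_δ0] at this
    exact norm_le_zero_iff.1 this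
  -- hence Z and dz2 vanish on [0, L]
  have hZzero : ∀ t ∈ Set.Icc (0:ℝ) L, Z t = 0 ∧ dz2 t = 0 := by
    intro t ht
    have h := hWzero (L - t) (hmem t ht)
    have hLt : L - (L - t) = t := by ring
    rw [hW] at h
    simp only [hLt, Prod.mk_eq_zero, neg_eq_zero] at h
    exact h
  have hz2zero : ∀ t ∈ Set.Icc (0:ℝ) L, z2 t = 0 := fun t ht =>
    (hZeq t ht).trans (hZzero t ht).1
  -- dz1 is constant, hence 0
  have hdz1d0 : ∀ x ∈ Set.Ico (0:ℝ) L, HasDerivWithinAt dz1 0 (Set.Ici x) x := by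
    intro x hx
    have h := (hz1 x (Set.mem_Icc_of_Ico hx)).2
    rw [hz2zero x (Set.mem_Icc_of_Ico hx), mul_zero] at h
    exact h.hasDerivWithinAt
  have hdz1cont : ContinuousOn dz1 (Set.Icc 0 L) := fun x hx =>
    (hz1 x hx).2.continuousAt.continuousWithinAt
  have hdz1const := constant_of_has_deriv_right_zero hdz1cont hdz1d0
  have hdz10 : dz1 0 = 0 := by rw [← hdz1const L hLmem, hdz1L]
  have hdz1zero : ∀ x ∈ Set.Icc (0:ℝ) L, dz1 x = 0 := fun x hx =>
    (hdz1const x hx).trans hdz10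
  -- z1 is constant, hence 0
  have hz1d0 : ∀ x ∈ Set.Ico (0:ℝ) L, HasDerivWithinAt z1 0 (Set.Ici x) x := by
    intro x hx
    have h := (hz1 x (Set.mem_Icc_of_Ico hx)).1
    rw [hdz1zero x (Set.mem_Icc_of_Ico hx)] at h
    exact h.hasDerivWithinAt
  have hz1cont : ContinuousOn z1 (Set.Icc 0 L) := fun x hx =>
    (hz1 x hx).1.continuousAt.continuousWithinAt
  have hz1const := constant_of_has_deriv_right_zero hz1cont hz1d0
  intro x hx
  exact ⟨(hz1const x hx).trans hz10, hz2zero x hx⟩
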